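/- In the Gaudin realization, the Gaudin Hamiltonians pairwise commute: [H^{(a)}, H^{(b)}] = 0 for all sites a, b ∈ {1,…,N}. -/
import Mathlib


/-- osp(1|2) Gaudin model data: sites, inhomogeneity parameters, and local
osp(1|2) operators with super-commutation relations across sites. -/
structure OspGaudinData (N : ℕ) (H : Type*) [AddCommGroup H] [Module ℂ H] where
  z : Fin N → ℂ
  z_inj : Function.Injective z
  h : Fin N → Module.End ℂ H
  Xp : Fin N → Module.End ℂ H
  Xm : Fin N → Module.End ℂ H
  vp : Fin N → Module.End ℂ H
  vm : Fin N → Module.End ℂ H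
  rel_hXp : ∀ a, h a * Xp a - Xp a * h a = (2:ℂ) • Xp a
  rel_hXm : ∀ a, h a * Xm a - Xm a * h a = (-2:ℂ) • Xm a
  rel_XpXm : ∀ a, Xp a * Xm a - Xm a * Xp a = h a
  rel_hvp : ∀ a, h a * vp a - vp a * h a = vp a
  rel_hvm : ∀ a, h a * vm a - vm a * h a = -vm a
  rel_vpvm : ∀ a, vp a * vm a + vm a * vp a = -h a
  rel_Xmvp : ∀ a, Xm a * vp a - vp a * Xm a = vm a
  rel_Xpvm : ∀ a, Xp a * vm a - vm a * Xp a = vp a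
  rel_vpvp : ∀ a, vp a * vp a = Xp a
  rel_vmvm : ∀ a, vm a * vm a = -Xm a
  rel_Xpvp : ∀ a, Xp a * vp a = vp a * Xp a
  rel_Xmvm : ∀ a, Xm a * vm a = vm a * Xm a
  even_comm : ∀ a b, a ≠ b → ∀ Y ∈ ({h a, Xp a, Xm a} : Set (Module.End ℂ H)),
      ∀ Z ∈ ({h b, Xp b, Xm b, vp b, vm b} : Set (Module.End ℂ H)), Y * Z = Z * Y
  odd_anticomm : ∀ a b, a ≠ b → ∀ Y ∈ ({vp a, vm a} : Set (Module.End ℂ H)),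
      ∀ Z ∈ ({vp b, vm b} : Set (Module.End ℂ H)), Y * Z + Z * Y = 0

namespace OspGaudinData

variable {N : ℕ} {H : Type*} [AddCommGroup H] [Module ℂ H]

/-- The Gaudin realization h(λ). -/
noncomputable def hl (G : OspGaudinData N H) (lam : ℂ) : Module.End ℂ H :=
  ∑ a, ((lam - G.z a)⁻¹) • G.h a

noncomputable def Xpl (G : OspGaudinData N H) (lam : ℂ) : Module.End ℂ H :=
  ∑ a, ((lam - G.z a)⁻¹) • G.Xp a

noncomputable def Xml (G : OspGaudinData N H) (lam : ℂ) : Module.End ℂ H :=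
  ∑ a, ((lam - G.z a)⁻¹) • G.Xm a

noncomputable def vpl (G : OspGaudinData N H) (lam : ℂ) : Module.End ℂ H :=
  ∑ a, ((lam - G.z a)⁻¹) • G.vp a

noncomputable def vml (G : OspGaudinData N H) (lam : ℂ) : Module.End ℂ H :=
  ∑ a, ((lam - G.z a)⁻¹) • G.vm a

/-- h′(λ) = −Σ_a h_a/(λ − z_a)². -/
noncomputable def hl' (G : OspGaudinData N H) (lam : ℂ) : Module.End ℂ H :=
  -∑ a, (((lam - G.z a)^2)⁻¹) • G.h a

/-- The generating function t(λ) of the integrals of motion. -/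
noncomputable def tOp (G : OspGaudinData N H) (lam : ℂ) : Module.End ℂ H :=
  G.hl lam * G.hl lam + G.hl' lam + (4:ℂ) • (G.Xpl lam * G.Xml lam)
    + (2:ℂ) • (G.vpl lam * G.vml lam)

/-- The Gaudin Hamiltonian at site `a`. -/
noncomputable def Gham (G : OspGaudinData N H) (a : Fin N) : Module.End ℂ H :=
  ∑ b ∈ Finset.univ.erase a, ((G.z a - G.z b)⁻¹) •
    (G.h a * G.h b + (2:ℂ) • (G.Xp a * G.Xm b + G.Xm a * G.Xp b)
      + (G.vp a * G.vm b - G.vm a * G.vp b))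

end OspGaudinData


/-! ### Auxiliary material for the proof -/

section GenericRing
variable {R : Type*} [Ring R]

private lemma osp_commute_of_eq {A Z : R} (h : A * Z = Z * A) : Commute A Z := h

private lemma osp_anticomm_pair {A B Z : R} (h1 : A*Z + Z*A = 0) (h2 : B*Z + Z*B = 0) :
    Commute (A*B) Z := by
  have key : (A*B)*Z - Z*(A*B) = 0 := by
    linear_combination (norm := noncomm_ring) A*h2 - h1*B
  exact sub_eq_zero.mp key

private lemma osp_gen_inv_h {ha ea fa pa ma hb eb fb pb mb T : R}
    (hT : T = ha*hb + ((ea*fb + fa*eb) + (ea*fb + fa*eb)) + (pa*mb - ma*pb))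
    (a1 : ha*ea - ea*ha = ea + ea) (a2 : ha*fa - fa*ha = -(fa+fa))
    (a4 : ha*pa - pa*ha = pa) (a5 : ha*ma - ma*ha = -ma)
    (b1 : hb*eb - eb*hb = eb + eb) (b2 : hb*fb - fb*hb = -(fb+fb))
    (b4 : hb*pb - pb*hb = pb) (b5 : hb*mb - mb*hb = -mb)
    (khh : ha*hb = hb*ha) (khe : ha*eb = eb*ha) (khf : ha*fb = fb*ha)
    (khp : ha*pb = pb*ha) (khm : ha*mb = mb*ha)
    (keh : ea*hb = hb*ea) (kfh : fa*hb = hb*fa) (kph : pa*hb = hb*pa)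
    (kmh : ma*hb = hb*ma) :
    Commute T (ha + hb) := by
  have key : T*(ha+hb) - (ha+hb)*T = 0 := by
    subst hT
    linear_combination (norm := noncomm_ring)
      -(ha*khh) + khh*hb
      + 2*(-(a1*fb) - ea*khf + keh*fb - ea*b2)
      + 2*(-(a2*eb) - fa*khe + kfh*eb - fa*b1)
      + (-(a4*mb) - pa*khm + kph*mb - pa*b5)
      - (-(a5*pb) - ma*khp + kmh*pb - ma*b4)
  exact sub_eq_zero.mp key

private lemma osp_gen_inv_e {ha ea fa pa ma hb eb fb pb mb T : R}
    (hT : T = ha*hb + ((ea*fb + fa*eb) + (ea*fb + fa*eb)) + (pa*mb - ma*pb))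
    (a1 : ha*ea - ea*ha = ea + ea) (a3 : ea*fa - fa*ea = ha)
    (a8 : ea*ma - ma*ea = pa) (a11 : ea*pa = pa*ea)
    (b1 : hb*eb - eb*hb = eb + eb) (b3 : eb*fb - fb*eb = hb)
    (b8 : eb*mb - mb*eb = pb) (b11 : eb*pb = pb*eb)
    (khe : ha*eb = eb*ha) (keh : ea*hb = hb*ea) (kee : ea*eb = eb*ea)
    (kef : ea*fb = fb*ea) (kem : ea*mb = mb*ea) (kep : ea*pb = pb*ea)
    (kfe : fa*eb = eb*fa) (kpe : pa*eb = eb*pa) (kme : ma*eb = eb*ma) :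
    Commute T (ea + eb) := by
  have key : T*(ea+eb) - (ea+eb)*T = 0 := by
    subst hT
    linear_combination (norm := noncomm_ring)
      (-(ha*keh) + a1*hb) + (ha*b1 + khe*hb)
      + 2*(-(ea*kef)) + 2*(-(ea*b3) + kee*fb)
      + 2*(-(fa*kee) - a3*eb) + 2*(kfe*eb)
      + (-(pa*kem) - a11*mb) + (-(pa*b8) + kpe*mb)
      - (-(ma*kep) - a8*pb) - (-(ma*b11) + kme*pb)
  exact sub_eq_zero.mp key

private lemma osp_gen_inv_f {ha ea fa pa ma hb eb fb pb mb T : R}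
    (hT : T = ha*hb + ((ea*fb + fa*eb) + (ea*fb + fa*eb)) + (pa*mb - ma*pb))
    (a2 : ha*fa - fa*ha = -(fa+fa)) (a3 : ea*fa - fa*ea = ha)
    (a7 : fa*pa - pa*fa = ma) (a12 : fa*ma = ma*fa)
    (b2 : hb*fb - fb*hb = -(fb+fb)) (b3 : eb*fb - fb*eb = hb)
    (b7 : fb*pb - pb*fb = mb) (b12 : fb*mb = mb*fb)
    (khf : ha*fb = fb*ha) (kfh : fa*hb = hb*fa) (kff : fa*fb = fb*fa)
    (kef : ea*fb = fb*ea) (kfe : fa*eb = eb*fa) (kfm : fa*mb = mb*fa)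
    (kfp : fa*pb = pb*fa) (kpf : pa*fb = fb*pa) (kmf : ma*fb = fb*ma) :
    Commute T (fa + fb) := by
  have key : T*(fa+fb) - (fa+fb)*T = 0 := by
    subst hT
    linear_combination (norm := noncomm_ring)
      (-(ha*kfh) + a2*hb) + (ha*b2 + khf*hb)
      + 2*(-(ea*kff) + a3*fb) + 2*(kef*fb)
      + 2*(-(fa*kfe)) + 2*(fa*b3 + kff*eb)
      + (-(pa*kfm) - a7*mb) + (-(pa*b12) + kpf*mb)
      - (-(ma*kfp) - a12*pb) - (-(ma*b7) + kmf*pb)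
  exact sub_eq_zero.mp key

private lemma osp_gen_inv_p {ha ea fa pa ma hb eb fb pb mb T : R}
    (hT : T = ha*hb + ((ea*fb + fa*eb) + (ea*fb + fa*eb)) + (pa*mb - ma*pb))
    (a4 : ha*pa - pa*ha = pa) (a6 : pa*ma + ma*pa = -ha)
    (a7 : fa*pa - pa*fa = ma) (a9 : pa*pa = ea) (a11 : ea*pa = pa*ea)
    (b4 : hb*pb - pb*hb = pb) (b6 : pb*mb + mb*pb = -hb)
    (b7 : fb*pb - pb*fb = mb) (b9 : pb*pb = eb) (b11 : eb*pb = pb*eb)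
    (khp : ha*pb = pb*ha) (kph : pa*hb = hb*pa) (kpf : pa*fb = fb*pa)
    (kpe : pa*eb = eb*pa) (kep : ea*pb = pb*ea) (kfp : fa*pb = pb*fa)
    (dpp : pa*pb + pb*pa = 0) (dpm : pa*mb + mb*pa = 0) (dmp : ma*pb + pb*ma = 0) :
    Commute T (pa + pb) := by
  have key : T*(pa+pb) - (pa+pb)*T = 0 := by
    subst hT
    linear_combination (norm := noncomm_ring)
      (-(ha*kph) + a4*hb) + (ha*b4 + khp*hb)
      + 2*(-(ea*kpf) + a11*fb) + 2*(ea*b7 + kep*fb)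
      + 2*(-(fa*kpe) + a7*eb) + 2*(fa*b11 + kfp*eb)
      + (pa*dpm - 2*(a9*mb)) + (pa*b6 - dpp*mb)
      - (ma*dpp - a6*pb) - (2*(ma*b9) - dmp*pb)
  exact sub_eq_zero.mp key

private lemma osp_gen_inv_m {ha ea fa pa ma hb eb fb pb mb T : R}
    (hT : T = ha*hb + ((ea*fb + fa*eb) + (ea*fb + fa*eb)) + (pa*mb - ma*pb))
    (a5 : ha*ma - ma*ha = -ma) (a6 : pa*ma + ma*pa = -ha)
    (a8 : ea*ma - ma*ea = pa) (a10 : ma*ma = -fa) (a12 : fa*ma = ma*fa)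
    (b5 : hb*mb - mb*hb = -mb) (b6 : pb*mb + mb*pb = -hb)
    (b8 : eb*mb - mb*eb = pb) (b10 : mb*mb = -fb) (b12 : fb*mb = mb*fb)
    (khm : ha*mb = mb*ha) (kmh : ma*hb = hb*ma) (kmf : ma*fb = fb*ma)
    (kme : ma*eb = eb*ma) (kem : ea*mb = mb*ea) (kfm : fa*mb = mb*fa)
    (dmm : ma*mb + mb*ma = 0) (dpm : pa*mb + mb*pa = 0) (dmp : ma*pb + pb*ma = 0) :
    Commute T (ma + mb) := by
  have key : T*(ma+mb) - (ma+mb)*T = 0 := by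
    subst hT
    linear_combination (norm := noncomm_ring)
      (-(ha*kmh) + a5*hb) + (ha*b5 + khm*hb)
      + 2*(-(ea*kmf) + a8*fb) + 2*(ea*b12 + kem*fb)
      + 2*(-(fa*kme) + a12*eb) + 2*(fa*b8 + kfm*eb)
      + (pa*dmm - a6*mb) + (2*(pa*b10) - dpm*mb)
      - (ma*dmp - 2*(a10*pb)) - (ma*b6 - dmm*pb)
  exact sub_eq_zero.mp key

end GenericRing

namespace OspGaudinData

variable {N : ℕ} {H : Type*} [AddCommGroup H] [Module ℂ H]

/-- Two-site quadratic pairing appearing in the Gaudin Hamiltonians. -/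
noncomputable def Theta (G : OspGaudinData N H) (a b : Fin N) : Module.End ℂ H :=
  G.h a * G.h b + (2:ℂ) • (G.Xp a * G.Xm b + G.Xm a * G.Xp b)
    + (G.vp a * G.vm b - G.vm a * G.vp b)

lemma Gham_eq (G : OspGaudinData N H) (a : Fin N) :
    G.Gham a = ∑ b ∈ Finset.univ.erase a, ((G.z a - G.z b)⁻¹) • G.Theta a b := rfl

section cross
variable (G : OspGaudinData N H) {a b : Fin N}

lemma Khh (hab : a ≠ b) : G.h a * G.h b = G.h b * G.h a := G.even_comm a b hab _ (by simp) _ (by simp)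
lemma Khe (hab : a ≠ b) : G.h a * G.Xp b = G.Xp b * G.h a := G.even_comm a b hab _ (by simp) _ (by simp)
lemma Khf (hab : a ≠ b) : G.h a * G.Xm b = G.Xm b * G.h a := G.even_comm a b hab _ (by simp) _ (by simp)
lemma Khp (hab : a ≠ b) : G.h a * G.vp b = G.vp b * G.h a := G.even_comm a b hab _ (by simp) _ (by simp)
lemma Khm (hab : a ≠ b) : G.h a * G.vm b = G.vm b * G.h a := G.even_comm a b hab _ (by simp) _ (by simp)
lemma Keh (hab : a ≠ b) : G.Xp a * G.h b = G.h b * G.Xp a := G.even_comm a b hab _ (by simp) _ (by simp)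
lemma Kee (hab : a ≠ b) : G.Xp a * G.Xp b = G.Xp b * G.Xp a := G.even_comm a b hab _ (by simp) _ (by simp)
lemma Kef (hab : a ≠ b) : G.Xp a * G.Xm b = G.Xm b * G.Xp a := G.even_comm a b hab _ (by simp) _ (by simp)
lemma Kep (hab : a ≠ b) : G.Xp a * G.vp b = G.vp b * G.Xp a := G.even_comm a b hab _ (by simp) _ (by simp)
lemma Kem (hab : a ≠ b) : G.Xp a * G.vm b = G.vm b * G.Xp a := G.even_comm a b hab _ (by simp) _ (by simp)
lemma Kfh (hab : a ≠ b) : G.Xm a * G.h b = G.h b * G.Xm a := G.even_comm a b hab _ (by simp) _ (by simp)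
lemma Kfe (hab : a ≠ b) : G.Xm a * G.Xp b = G.Xp b * G.Xm a := G.even_comm a b hab _ (by simp) _ (by simp)
lemma Kff (hab : a ≠ b) : G.Xm a * G.Xm b = G.Xm b * G.Xm a := G.even_comm a b hab _ (by simp) _ (by simp)
lemma Kfp (hab : a ≠ b) : G.Xm a * G.vp b = G.vp b * G.Xm a := G.even_comm a b hab _ (by simp) _ (by simp)
lemma Kfm (hab : a ≠ b) : G.Xm a * G.vm b = G.vm b * G.Xm a := G.even_comm a b hab _ (by simp) _ (by simp)
lemma Kph (hab : a ≠ b) : G.vp a * G.h b = G.h b * G.vp a := (G.even_comm b a hab.symm _ (by simp) _ (by simp)).symm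
lemma Kpe (hab : a ≠ b) : G.vp a * G.Xp b = G.Xp b * G.vp a := (G.even_comm b a hab.symm _ (by simp) _ (by simp)).symm
lemma Kpf (hab : a ≠ b) : G.vp a * G.Xm b = G.Xm b * G.vp a := (G.even_comm b a hab.symm _ (by simp) _ (by simp)).symm
lemma Kmh (hab : a ≠ b) : G.vm a * G.h b = G.h b * G.vm a := (G.even_comm b a hab.symm _ (by simp) _ (by simp)).symm
lemma Kme (hab : a ≠ b) : G.vm a * G.Xp b = G.Xp b * G.vm a := (G.even_comm b a hab.symm _ (by simp) _ (by simp)).symm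
lemma Kmf (hab : a ≠ b) : G.vm a * G.Xm b = G.Xm b * G.vm a := (G.even_comm b a hab.symm _ (by simp) _ (by simp)).symm
lemma App (hab : a ≠ b) : G.vp a * G.vp b + G.vp b * G.vp a = 0 := G.odd_anticomm a b hab _ (by simp) _ (by simp)
lemma Apm (hab : a ≠ b) : G.vp a * G.vm b + G.vm b * G.vp a = 0 := G.odd_anticomm a b hab _ (by simp) _ (by simp)
lemma Amp (hab : a ≠ b) : G.vm a * G.vp b + G.vp b * G.vm a = 0 := G.odd_anticomm a b hab _ (by simp) _ (by simp)
lemma Amm (hab : a ≠ b) : G.vm a * G.vm b + G.vm b * G.vm a = 0 := G.odd_anticomm a b hab _ (by simp) _ (by simp)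

end cross

lemma rA1 (G : OspGaudinData N H) (a : Fin N) :
    G.h a * G.Xp a - G.Xp a * G.h a = G.Xp a + G.Xp a := by
  rw [G.rel_hXp a]; module

lemma rA2 (G : OspGaudinData N H) (a : Fin N) :
    G.h a * G.Xm a - G.Xm a * G.h a = -(G.Xm a + G.Xm a) := by
  rw [G.rel_hXm a]; module

lemma theta_eq (G : OspGaudinData N H) (a b : Fin N) :
    G.Theta a b = G.h a * G.h b
      + ((G.Xp a * G.Xm b + G.Xm a * G.Xp b) + (G.Xp a * G.Xm b + G.Xm a * G.Xp b))
      + (G.vp a * G.vm b - G.vm a * G.vp b) := by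
  rw [Theta, two_smul]

/-- The pairing is symmetric in its two sites. -/
lemma theta_symm (G : OspGaudinData N H) {a b : Fin N} (hab : a ≠ b) :
    G.Theta a b = G.Theta b a := by
  have h1 : G.vp a * G.vm b = -(G.vm b * G.vp a) := eq_neg_of_add_eq_zero_left (G.Apm hab)
  have h2 : G.vm a * G.vp b = -(G.vp b * G.vm a) := eq_neg_of_add_eq_zero_left (G.Amp hab)
  rw [Theta, Theta, G.Khh hab, G.Kef hab, G.Kfe hab, h1, h2]
  module

/-- The five invariance (Casimir) identities. -/
lemma inv_h (G : OspGaudinData N H) {a b : Fin N} (hab : a ≠ b) :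
    Commute (G.Theta a b) (G.h a + G.h b) :=
  osp_gen_inv_h (G.theta_eq a b)
    (G.rA1 a) (G.rA2 a) (G.rel_hvp a) (G.rel_hvm a)
    (G.rA1 b) (G.rA2 b) (G.rel_hvp b) (G.rel_hvm b)
    (G.Khh hab) (G.Khe hab) (G.Khf hab) (G.Khp hab) (G.Khm hab)
    (G.Keh hab) (G.Kfh hab) (G.Kph hab) (G.Kmh hab)

lemma inv_e (G : OspGaudinData N H) {a b : Fin N} (hab : a ≠ b) :
    Commute (G.Theta a b) (G.Xp a + G.Xp b) :=
  osp_gen_inv_e (G.theta_eq a b)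
    (G.rA1 a) (G.rel_XpXm a) (G.rel_Xpvm a) (G.rel_Xpvp a)
    (G.rA1 b) (G.rel_XpXm b) (G.rel_Xpvm b) (G.rel_Xpvp b)
    (G.Khe hab) (G.Keh hab) (G.Kee hab) (G.Kef hab) (G.Kem hab) (G.Kep hab)
    (G.Kfe hab) (G.Kpe hab) (G.Kme hab)

lemma inv_f (G : OspGaudinData N H) {a b : Fin N} (hab : a ≠ b) :
    Commute (G.Theta a b) (G.Xm a + G.Xm b) :=
  osp_gen_inv_f (G.theta_eq a b)
    (G.rA2 a) (G.rel_XpXm a) (G.rel_Xmvp a) (G.rel_Xmvm a)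
    (G.rA2 b) (G.rel_XpXm b) (G.rel_Xmvp b) (G.rel_Xmvm b)
    (G.Khf hab) (G.Kfh hab) (G.Kff hab) (G.Kef hab) (G.Kfe hab) (G.Kfm hab)
    (G.Kfp hab) (G.Kpf hab) (G.Kmf hab)

lemma inv_p (G : OspGaudinData N H) {a b : Fin N} (hab : a ≠ b) :
    Commute (G.Theta a b) (G.vp a + G.vp b) :=
  osp_gen_inv_p (G.theta_eq a b)
    (G.rel_hvp a) (G.rel_vpvm a) (G.rel_Xmvp a) (G.rel_vpvp a) (G.rel_Xpvp a)
    (G.rel_hvp b) (G.rel_vpvm b) (G.rel_Xmvp b) (G.rel_vpvp b) (G.rel_Xpvp b)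
    (G.Khp hab) (G.Kph hab) (G.Kpf hab) (G.Kpe hab) (G.Kep hab) (G.Kfp hab)
    (G.App hab) (G.Apm hab) (G.Amp hab)

lemma inv_m (G : OspGaudinData N H) {a b : Fin N} (hab : a ≠ b) :
    Commute (G.Theta a b) (G.vm a + G.vm b) :=
  osp_gen_inv_m (G.theta_eq a b)
    (G.rel_hvm a) (G.rel_vpvm a) (G.rel_Xpvm a) (G.rel_vmvm a) (G.rel_Xmvm a)
    (G.rel_hvm b) (G.rel_vpvm b) (G.rel_Xpvm b) (G.rel_vmvm b) (G.rel_Xmvm b)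
    (G.Khm hab) (G.Kmh hab) (G.Kmf hab) (G.Kme hab) (G.Kem hab) (G.Kfm hab)
    (G.Amm hab) (G.Apm hab) (G.Amp hab)

section thirdsite
variable (G : OspGaudinData N H) {a b c d : Fin N}

lemma theta_comm_of {Z : Module.End ℂ H}
    (chA : Commute (G.h a) Z) (ceA : Commute (G.Xp a) Z) (cfA : Commute (G.Xm a) Z)
    (chB : Commute (G.h b) Z) (ceB : Commute (G.Xp b) Z) (cfB : Commute (G.Xm b) Z)
    (cpm : Commute (G.vp a * G.vm b) Z) (cmp : Commute (G.vm a * G.vp b) Z) :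
    Commute (G.Theta a b) Z := by
  show Commute (G.h a * G.h b + (2:ℂ) • (G.Xp a * G.Xm b + G.Xm a * G.Xp b)
    + (G.vp a * G.vm b - G.vm a * G.vp b)) Z
  exact ((chA.mul_left chB).add_left
      (((ceA.mul_left cfB).add_left (cfA.mul_left ceB)).smul_left (2:ℂ))).add_left
    (cpm.sub_left cmp)

lemma Tch (hac : a ≠ c) (hbc : b ≠ c) : Commute (G.Theta a b) (G.h c) :=
  G.theta_comm_of (osp_commute_of_eq (G.Khh hac)) (osp_commute_of_eq (G.Keh hac))
    (osp_commute_of_eq (G.Kfh hac)) (osp_commute_of_eq (G.Khh hbc))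
    (osp_commute_of_eq (G.Keh hbc)) (osp_commute_of_eq (G.Kfh hbc))
    ((osp_commute_of_eq (G.Kph hac)).mul_left (osp_commute_of_eq (G.Kmh hbc)))
    ((osp_commute_of_eq (G.Kmh hac)).mul_left (osp_commute_of_eq (G.Kph hbc)))

lemma Tce (hac : a ≠ c) (hbc : b ≠ c) : Commute (G.Theta a b) (G.Xp c) :=
  G.theta_comm_of (osp_commute_of_eq (G.Khe hac)) (osp_commute_of_eq (G.Kee hac))
    (osp_commute_of_eq (G.Kfe hac)) (osp_commute_of_eq (G.Khe hbc))
    (osp_commute_of_eq (G.Kee hbc)) (osp_commute_of_eq (G.Kfe hbc))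
    ((osp_commute_of_eq (G.Kpe hac)).mul_left (osp_commute_of_eq (G.Kme hbc)))
    ((osp_commute_of_eq (G.Kme hac)).mul_left (osp_commute_of_eq (G.Kpe hbc)))

lemma Tcf (hac : a ≠ c) (hbc : b ≠ c) : Commute (G.Theta a b) (G.Xm c) :=
  G.theta_comm_of (osp_commute_of_eq (G.Khf hac)) (osp_commute_of_eq (G.Kef hac))
    (osp_commute_of_eq (G.Kff hac)) (osp_commute_of_eq (G.Khf hbc))
    (osp_commute_of_eq (G.Kef hbc)) (osp_commute_of_eq (G.Kff hbc))
    ((osp_commute_of_eq (G.Kpf hac)).mul_left (osp_commute_of_eq (G.Kmf hbc)))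
    ((osp_commute_of_eq (G.Kmf hac)).mul_left (osp_commute_of_eq (G.Kpf hbc)))

lemma Tcp (hac : a ≠ c) (hbc : b ≠ c) : Commute (G.Theta a b) (G.vp c) :=
  G.theta_comm_of (osp_commute_of_eq (G.Khp hac)) (osp_commute_of_eq (G.Kep hac))
    (osp_commute_of_eq (G.Kfp hac)) (osp_commute_of_eq (G.Khp hbc))
    (osp_commute_of_eq (G.Kep hbc)) (osp_commute_of_eq (G.Kfp hbc))
    (osp_anticomm_pair (G.App hac) (G.Amp hbc))
    (osp_anticomm_pair (G.Amp hac) (G.App hbc))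

lemma Tcm (hac : a ≠ c) (hbc : b ≠ c) : Commute (G.Theta a b) (G.vm c) :=
  G.theta_comm_of (osp_commute_of_eq (G.Khm hac)) (osp_commute_of_eq (G.Kem hac))
    (osp_commute_of_eq (G.Kfm hac)) (osp_commute_of_eq (G.Khm hbc))
    (osp_commute_of_eq (G.Kem hbc)) (osp_commute_of_eq (G.Kfm hbc))
    (osp_anticomm_pair (G.Apm hac) (G.Amm hbc))
    (osp_anticomm_pair (G.Amm hac) (G.Apm hbc))

/-- Thetas on disjoint pairs of sites commute. -/
lemma theta_comm_theta (hac : a ≠ c) (had : a ≠ d) (hbc : b ≠ c) (hbd : b ≠ d) :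
    Commute (G.Theta a b) (G.Theta c d) := by
  show Commute (G.Theta a b) (G.h c * G.h d
    + (2:ℂ) • (G.Xp c * G.Xm d + G.Xm c * G.Xp d) + (G.vp c * G.vm d - G.vm c * G.vp d))
  exact (((G.Tch hac hbc).mul_right (G.Tch had hbd)).add_right
      ((((G.Tce hac hbc).mul_right (G.Tcf had hbd)).add_right
        ((G.Tcf hac hbc).mul_right (G.Tce had hbd))).smul_right (2:ℂ))).add_right
    (((G.Tcp hac hbc).mul_right (G.Tcm had hbd)).sub_right
      ((G.Tcm hac hbc).mul_right (G.Tcp had hbd)))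

/-- The key three-site identity. -/
lemma theta_key (hab : a ≠ b) (hac : a ≠ c) (hbc : b ≠ c) :
    (G.Theta a b * G.Theta a c - G.Theta a c * G.Theta a b)
      + (G.Theta a b * G.Theta b c - G.Theta b c * G.Theta a b) = 0 := by
  have hrw : G.Theta a c + G.Theta b c
      = (G.h a + G.h b) * G.h c
        + (2:ℂ) • ((G.Xp a + G.Xp b) * G.Xm c + (G.Xm a + G.Xm b) * G.Xp c)
        + ((G.vp a + G.vp b) * G.vm c - (G.vm a + G.vm b) * G.vp c) := by
    simp only [Theta, add_mul, smul_add]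
    abel
  have hC : Commute (G.Theta a b) (G.Theta a c + G.Theta b c) := by
    rw [hrw]
    exact (((G.inv_h hab).mul_right (G.Tch hac hbc)).add_right
        ((((G.inv_e hab).mul_right (G.Tcf hac hbc)).add_right
          ((G.inv_f hab).mul_right (G.Tce hac hbc))).smul_right (2:ℂ))).add_right
      (((G.inv_p hab).mul_right (G.Tcm hac hbc)).sub_right
        ((G.inv_m hab).mul_right (G.Tcp hac hbc)))
  linear_combination (norm := noncomm_ring) hC.eq

end thirdsite

end OspGaudinData

/-- the Gaudin Hamiltonians pairwise commute. -/
theorem Gham_commute {N : ℕ} {H : Type*} [AddCommGroup H] [Module ℂ H]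
    (hN : 1 ≤ N) (G : OspGaudinData N H) (a b : Fin N) :
    G.Gham a * G.Gham b - G.Gham b * G.Gham a = 0 := by
  classical
  rcases eq_or_ne a b with rfl | hab
  · simp
  rw [G.Gham_eq a, G.Gham_eq b]
  have hbA : b ∈ Finset.univ.erase a := Finset.mem_erase.mpr ⟨hab.symm, Finset.mem_univ b⟩
  have haB : a ∈ Finset.univ.erase b := Finset.mem_erase.mpr ⟨hab, Finset.mem_univ a⟩
  rw [← Finset.add_sum_erase _ _ hbA, ← Finset.add_sum_erase _ _ haB]
  rw [show (Finset.univ.erase b).erase a = (Finset.univ.erase a).erase b from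
    Finset.erase_right_comm]
  set S := (Finset.univ.erase a).erase b with hS
  set X := (G.z a - G.z b)⁻¹ • G.Theta a b with hX
  set Y := (G.z b - G.z a)⁻¹ • G.Theta b a with hY
  set P := ∑ e ∈ S, (G.z a - G.z e)⁻¹ • G.Theta a e with hP
  set Q := ∑ e ∈ S, (G.z b - G.z e)⁻¹ • G.Theta b e with hQ
  have hmem : ∀ e ∈ S, e ≠ b ∧ e ≠ a := by
    intro e he
    rw [hS, Finset.mem_erase, Finset.mem_erase] at he
    exact ⟨he.1, he.2.1⟩
  -- the (a,b) ↔ (b,a) block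
  have hXY : X * Y - Y * X = 0 := by
    rw [hX, hY, G.theta_symm hab, smul_mul_smul_comm, smul_mul_smul_comm,
      mul_comm ((G.z a - G.z b)⁻¹) ((G.z b - G.z a)⁻¹)]
    exact sub_self _
  -- cross blocks
  have hXQ : X * Q - Q * X
      = ∑ e ∈ S, (X * ((G.z b - G.z e)⁻¹ • G.Theta b e)
          - ((G.z b - G.z e)⁻¹ • G.Theta b e) * X) := by
    rw [hQ, Finset.mul_sum, Finset.sum_mul, ← Finset.sum_sub_distrib]
  have hPY : P * Y - Y * P
      = ∑ e ∈ S, (((G.z a - G.z e)⁻¹ • G.Theta a e) * Y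
          - Y * ((G.z a - G.z e)⁻¹ • G.Theta a e)) := by
    rw [hP, Finset.mul_sum, Finset.sum_mul, ← Finset.sum_sub_distrib]
  -- the double-sum block collapses to its diagonal
  have hPQ : P * Q - Q * P
      = ∑ e ∈ S, (((G.z a - G.z e)⁻¹ • G.Theta a e) * ((G.z b - G.z e)⁻¹ • G.Theta b e)
          - ((G.z b - G.z e)⁻¹ • G.Theta b e) * ((G.z a - G.z e)⁻¹ • G.Theta a e)) := by
    rw [hP, hQ, Finset.sum_mul_sum, Finset.sum_mul_sum,
      Finset.sum_comm (s := S) (t := S)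
        (f := fun i j => ((G.z b - G.z i)⁻¹ • G.Theta b i) * ((G.z a - G.z j)⁻¹ • G.Theta a j)),
      ← Finset.sum_sub_distrib]
    refine Finset.sum_congr rfl ?_
    intro e he
    rw [← Finset.sum_sub_distrib]
    refine Finset.sum_eq_single_of_mem e he ?_
    intro e' he' hne
    obtain ⟨heb, hea⟩ := hmem e he
    obtain ⟨he'b, he'a⟩ := hmem e' he'
    have hcomm : Commute (G.Theta a e) (G.Theta b e') :=
      G.theta_comm_theta hab (Ne.symm he'a) heb (fun h => hne h.symm)
    have : ((G.z a - G.z e)⁻¹ • G.Theta a e) * ((G.z b - G.z e')⁻¹ • G.Theta b e')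
        = ((G.z b - G.z e')⁻¹ • G.Theta b e') * ((G.z a - G.z e)⁻¹ • G.Theta a e) :=
      ((hcomm.smul_left _).smul_right _)
    rw [this, sub_self]
  have expand : (X + P) * (Y + Q) - (Y + Q) * (X + P)
      = (X*Y - Y*X) + ((X*Q - Q*X) + ((P*Y - Y*P) + (P*Q - Q*P))) := by noncomm_ring
  rw [expand, hXY, hXQ, hPY, hPQ, zero_add, ← Finset.sum_add_distrib, ← Finset.sum_add_distrib]
  apply Finset.sum_eq_zero
  intro e he
  obtain ⟨heb, hea⟩ := hmem e he
  have hae : a ≠ e := Ne.symm hea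
  have hbe : b ≠ e := Ne.symm heb
  -- abbreviations
  rw [hX, hY, ← G.theta_symm hab]
  -- key identities
  have K1 := G.theta_key hab hae hbe
  have K2 := G.theta_key hea heb hab
  rw [G.theta_symm hea, G.theta_symm heb] at K2
  have B1 : G.Theta a b * G.Theta b e - G.Theta b e * G.Theta a b
      = -(G.Theta a b * G.Theta a e - G.Theta a e * G.Theta a b) := by
    linear_combination (norm := noncomm_ring) K1
  have B3 : G.Theta a e * G.Theta b e - G.Theta b e * G.Theta a e
      = G.Theta a b * G.Theta a e - G.Theta a e * G.Theta a b := by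
    linear_combination (norm := noncomm_ring) K2
  have hgoal : ((G.z a - G.z b)⁻¹ • G.Theta a b) * ((G.z b - G.z e)⁻¹ • G.Theta b e)
        - ((G.z b - G.z e)⁻¹ • G.Theta b e) * ((G.z a - G.z b)⁻¹ • G.Theta a b)
      + (((G.z a - G.z e)⁻¹ • G.Theta a e) * ((G.z b - G.z a)⁻¹ • G.Theta a b)
        - ((G.z b - G.z a)⁻¹ • G.Theta a b) * ((G.z a - G.z e)⁻¹ • G.Theta a e)
      + (((G.z a - G.z e)⁻¹ • G.Theta a e) * ((G.z b - G.z e)⁻¹ • G.Theta b e)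
        - ((G.z b - G.z e)⁻¹ • G.Theta b e) * ((G.z a - G.z e)⁻¹ • G.Theta a e)))
      = ((G.z a - G.z b)⁻¹ * (G.z b - G.z e)⁻¹)
          • (G.Theta a b * G.Theta b e - G.Theta b e * G.Theta a b)
        + ((G.z a - G.z e)⁻¹ * (G.z b - G.z a)⁻¹)
          • (G.Theta a e * G.Theta a b - G.Theta a b * G.Theta a e)
        + ((G.z a - G.z e)⁻¹ * (G.z b - G.z e)⁻¹)
          • (G.Theta a e * G.Theta b e - G.Theta b e * G.Theta a e) := by
    simp only [smul_mul_smul_comm]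
    module
  rw [hgoal, B1, B3]
  have hB2 : G.Theta a e * G.Theta a b - G.Theta a b * G.Theta a e
      = -(G.Theta a b * G.Theta a e - G.Theta a e * G.Theta a b) := by noncomm_ring
  rw [hB2]
  have hscalar : -((G.z a - G.z b)⁻¹ * (G.z b - G.z e)⁻¹)
      - ((G.z a - G.z e)⁻¹ * (G.z b - G.z a)⁻¹)
      + ((G.z a - G.z e)⁻¹ * (G.z b - G.z e)⁻¹) = 0 := by
    have h1 : G.z a - G.z b ≠ 0 := sub_ne_zero.mpr (fun h => hab (G.z_inj h))
    have h2 : G.z a - G.z e ≠ 0 := sub_ne_zero.mpr (fun h => hae (G.z_inj h))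
    have h3 : G.z b - G.z e ≠ 0 := sub_ne_zero.mpr (fun h => hbe (G.z_inj h))
    have h4 : G.z b - G.z a ≠ 0 := sub_ne_zero.mpr (fun h => hab.symm (G.z_inj h))
    field_simp
    ring
  calc ((G.z a - G.z b)⁻¹ * (G.z b - G.z e)⁻¹)
          • -(G.Theta a b * G.Theta a e - G.Theta a e * G.Theta a b)
        + ((G.z a - G.z e)⁻¹ * (G.z b - G.z a)⁻¹)
          • -(G.Theta a b * G.Theta a e - G.Theta a e * G.Theta a b)
        + ((G.z a - G.z e)⁻¹ * (G.z b - G.z e)⁻¹)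
          • (G.Theta a b * G.Theta a e - G.Theta a e * G.Theta a b)
      = (-((G.z a - G.z b)⁻¹ * (G.z b - G.z e)⁻¹)
          - ((G.z a - G.z e)⁻¹ * (G.z b - G.z a)⁻¹)
          + ((G.z a - G.z e)⁻¹ * (G.z b - G.z e)⁻¹))
          • (G.Theta a b * G.Theta a e - G.Theta a e * G.Theta a b) := by module
    _ = 0 := by rw [hscalar, zero_smul]
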